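/- If j₁ = 0, j₂ > 0 and j₃ > 0, then the system b₁(b₂² − b₃²) = j₁, b₂(b₁² − b₃²) = j₂, b₃(b₁² + b₂²) = j₃ has exactly one real solution when j₃ ≤ j₂, namely (0, −(j₃²/j₂)^{1/3}, (j₂²/j₃)^{1/3}), and exactly five real solutions when j₃ > j₂: the solution (0, −(j₃²/j₂)^{1/3}, (j₂²/j₃)^{1/3}) together with the four solutions b₁ = ± √(j₃ + j₂)/(4(j₃ − j₂))^{1/6}, b₂ = b₃ = ((j₃ − j₂)/2)^{1/3}, and b₁ = ± √(j₃ − j₂)/(4(j₃ + j₂))^{1/6}, b₃ = −b₂ = ((j₃ + j₂)/2)^{1/3} (all cube roots real). -/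

import Mathlib

/-- The real cube root. -/
noncomputable def cbrt (x : ℝ) : ℝ :=
  if 0 ≤ x then x ^ ((1 : ℝ) / 3) else -((-x) ^ ((1 : ℝ) / 3))


lemma cube_inj {a b : ℝ} (h : a ^ 3 = b ^ 3) : a = b :=
  (Odd.strictMono_pow (R := ℝ) (by decide)).injective h

lemma cbrt_cube (x : ℝ) : cbrt x ^ 3 = x := by
  unfold cbrt
  split_ifs with h
  · rw [← Real.rpow_natCast (x ^ ((1:ℝ)/3)) 3, ← Real.rpow_mul h]
    norm_num
  · push_neg at h
    rw [neg_pow, ← Real.rpow_natCast ((-x) ^ ((1:ℝ)/3)) 3, ← Real.rpow_mul (by linarith)]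
    norm_num

lemma cbrt_pos {x : ℝ} (hx : 0 < x) : 0 < cbrt x := by
  unfold cbrt; rw [if_pos hx.le]; positivity

lemma eq_cbrt_of_cube {a x : ℝ} (h : a ^ 3 = x) : a = cbrt x :=
  cube_inj (by rw [h, cbrt_cube])

lemma forward_classify {j₂ j₃ b₁ b₂ b₃ : ℝ} (h2 : 0 < j₂) (h3 : 0 < j₃)
    (e1 : b₁ * (b₂ ^ 2 - b₃ ^ 2) = 0)
    (e2 : b₂ * (b₁ ^ 2 - b₃ ^ 2) = j₂)
    (e3 : b₃ * (b₁ ^ 2 + b₂ ^ 2) = j₃) :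
    (b₁ = 0 ∧ b₂ = -cbrt (j₃ ^ 2 / j₂) ∧ b₃ = cbrt (j₂ ^ 2 / j₃)) ∨
    (j₂ < j₃ ∧ b₂ = cbrt ((j₃ - j₂) / 2) ∧ b₃ = b₂ ∧ b₁ ^ 2 = (j₃ + j₂) / (2 * b₂)) ∨
    (j₂ < j₃ ∧ b₃ = cbrt ((j₃ + j₂) / 2) ∧ b₂ = -b₃ ∧ b₁ ^ 2 = (j₃ - j₂) / (2 * b₃)) := by
  by_cases hb1 : b₁ = 0
  · left
    subst hb1
    have E2 : b₂ * b₃ ^ 2 = -j₂ := by linear_combination -e2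
    have E3 : b₃ * b₂ ^ 2 = j₃ := by linear_combination e3
    have hb3 : 0 < b₃ := by
      by_contra h
      push_neg at h
      nlinarith [sq_nonneg b₂]
    have H3 : b₃ ^ 3 = j₂ ^ 2 / j₃ := by
      rw [eq_div_iff h3.ne']
      linear_combination (-(b₃ ^ 3)) * E3 + (b₂ * b₃ ^ 2 - j₂) * E2
    have H2 : (-b₂) ^ 3 = j₃ ^ 2 / j₂ := by
      rw [eq_div_iff h2.ne']
      linear_combination (b₃ * b₂ ^ 2 + j₃) * E3 + (-(b₂ ^ 3)) * E2
    refine ⟨rfl, ?_, eq_cbrt_of_cube H3⟩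
    have := eq_cbrt_of_cube H2
    linarith
  · have h0 : b₂ ^ 2 - b₃ ^ 2 = 0 := (mul_eq_zero.mp e1).resolve_left hb1
    have hb1sq : 0 < b₁ ^ 2 := by positivity
    rcases mul_eq_zero.mp (show (b₂ - b₃) * (b₂ + b₃) = 0 by linear_combination h0) with h | h
    · -- b₃ = b₂
      have hb : b₃ = b₂ := by linarith
      rw [hb] at e2 e3
      have hc : 0 < b₂ := by
        by_contra hcon
        push_neg at hcon
        nlinarith [mul_nonneg (neg_nonneg.mpr hcon) (sq_nonneg b₁)]
      have hcc : b₂ ^ 3 = (j₃ - j₂) / 2 := by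
        rw [eq_div_iff (by norm_num : (2:ℝ) ≠ 0)]
        linear_combination e3 - e2
      have hj : j₂ < j₃ := by nlinarith [pow_pos hc 3]
      right; left
      refine ⟨hj, eq_cbrt_of_cube hcc, hb, ?_⟩
      rw [eq_div_iff (by positivity)]
      linear_combination e3 + e2
    · -- b₂ = -b₃
      have hb : b₂ = -b₃ := by linarith
      rw [hb] at e2 e3
      have hcc : b₃ ^ 3 = (j₃ + j₂) / 2 := by
        rw [eq_div_iff (by norm_num : (2:ℝ) ≠ 0)]
        linear_combination e3 + e2
      have hc : 0 < b₃ := by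
        by_contra hcon
        push_neg at hcon
        nlinarith [mul_nonneg (neg_nonneg.mpr hcon) (sq_nonneg b₃)]
      have hj : j₂ < j₃ := by nlinarith [mul_pos hb1sq hc]
      right; right
      refine ⟨hj, eq_cbrt_of_cube hcc, hb, ?_⟩
      rw [eq_div_iff (by positivity)]
      linear_combination e3 - e2

lemma backward_sol {j₂ j₃ b₁ b₂ b₃ : ℝ} (h2 : 0 < j₂) (h3 : 0 < j₃)
    (h : (b₁ = 0 ∧ b₂ = -cbrt (j₃ ^ 2 / j₂) ∧ b₃ = cbrt (j₂ ^ 2 / j₃)) ∨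
      (j₂ < j₃ ∧ b₂ = cbrt ((j₃ - j₂) / 2) ∧ b₃ = b₂ ∧ b₁ ^ 2 = (j₃ + j₂) / (2 * b₂)) ∨
      (j₂ < j₃ ∧ b₃ = cbrt ((j₃ + j₂) / 2) ∧ b₂ = -b₃ ∧ b₁ ^ 2 = (j₃ - j₂) / (2 * b₃))) :
    b₁ * (b₂ ^ 2 - b₃ ^ 2) = 0 ∧
      b₂ * (b₁ ^ 2 - b₃ ^ 2) = j₂ ∧
      b₃ * (b₁ ^ 2 + b₂ ^ 2) = j₃ := by
  rcases h with ⟨rfl, rfl, rfl⟩ | ⟨hj, hb2, hb3, hb1⟩ | ⟨hj, hb3, hb2, hb1⟩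
  · set A := cbrt (j₃ ^ 2 / j₂) with hA
    set B := cbrt (j₂ ^ 2 / j₃) with hB
    have hAB : A * B ^ 2 = j₂ := by
      apply cube_inj
      have : (A * B ^ 2) ^ 3 = A ^ 3 * (B ^ 3) ^ 2 := by ring
      rw [this, hA, hB, cbrt_cube, cbrt_cube]
      field_simp
    have hBA : B * A ^ 2 = j₃ := by
      apply cube_inj
      have : (B * A ^ 2) ^ 3 = B ^ 3 * (A ^ 3) ^ 2 := by ring
      rw [this, hA, hB, cbrt_cube, cbrt_cube]
      field_simp
    refine ⟨by ring, by linear_combination hAB, by linear_combination hBA⟩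
  · have hc : 0 < b₂ := hb2 ▸ cbrt_pos (by linarith)
    have hcc : b₂ ^ 3 = (j₃ - j₂) / 2 := by rw [hb2, cbrt_cube]
    have h2c : b₁ ^ 2 * (2 * b₂) = j₃ + j₂ := by
      rw [hb1]; field_simp
    subst hb3
    exact ⟨by ring, by linear_combination (1/2) * h2c - hcc,
      by linear_combination (1/2) * h2c + hcc⟩
  · have hc : 0 < b₃ := hb3 ▸ cbrt_pos (by linarith)
    have hcc : b₃ ^ 3 = (j₃ + j₂) / 2 := by rw [hb3, cbrt_cube]
    have h2c : b₁ ^ 2 * (2 * b₃) = j₃ - j₂ := by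
      rw [hb1]; field_simp
    subst hb2
    exact ⟨by ring, by linear_combination (-(1:ℝ)/2) * h2c + hcc,
      by linear_combination (1/2) * h2c + hcc⟩

lemma e_sq {j₂ j₃ : ℝ} (h2 : 0 < j₂) (hj : j₂ < j₃) :
    (Real.sqrt (j₃ + j₂) / (4 * (j₃ - j₂)) ^ ((1 : ℝ) / 6)) ^ 2 =
      (j₃ + j₂) / (2 * cbrt ((j₃ - j₂) / 2)) := by
  have hx : (0:ℝ) < 4 * (j₃ - j₂) := by linarith
  have h6 : ((4 * (j₃ - j₂)) ^ ((1 : ℝ) / 6)) ^ 2 = (4 * (j₃ - j₂)) ^ ((1 : ℝ) / 3) := by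
    rw [← Real.rpow_natCast ((4 * (j₃ - j₂)) ^ ((1:ℝ)/6)) 2, ← Real.rpow_mul hx.le]
    norm_num
  have h13 : (4 * (j₃ - j₂)) ^ ((1 : ℝ) / 3) = 2 * cbrt ((j₃ - j₂) / 2) := by
    apply cube_inj
    rw [← Real.rpow_natCast ((4 * (j₃ - j₂)) ^ ((1:ℝ)/3)) 3, ← Real.rpow_mul hx.le]
    norm_num
    rw [mul_pow, cbrt_cube]
    ring
  rw [div_pow, Real.sq_sqrt (by linarith), h6, h13]

lemma f_sq {j₂ j₃ : ℝ} (h2 : 0 < j₂) (hj : j₂ < j₃) :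
    (Real.sqrt (j₃ - j₂) / (4 * (j₃ + j₂)) ^ ((1 : ℝ) / 6)) ^ 2 =
      (j₃ - j₂) / (2 * cbrt ((j₃ + j₂) / 2)) := by
  have hx : (0:ℝ) < 4 * (j₃ + j₂) := by linarith
  have h6 : ((4 * (j₃ + j₂)) ^ ((1 : ℝ) / 6)) ^ 2 = (4 * (j₃ + j₂)) ^ ((1 : ℝ) / 3) := by
    rw [← Real.rpow_natCast ((4 * (j₃ + j₂)) ^ ((1:ℝ)/6)) 2, ← Real.rpow_mul hx.le]
    norm_num
  have h13 : (4 * (j₃ + j₂)) ^ ((1 : ℝ) / 3) = 2 * cbrt ((j₃ + j₂) / 2) := by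
    apply cube_inj
    rw [← Real.rpow_natCast ((4 * (j₃ + j₂)) ^ ((1:ℝ)/3)) 3, ← Real.rpow_mul hx.le]
    norm_num
    rw [mul_pow, cbrt_cube]
    ring
  rw [div_pow, Real.sq_sqrt (by linarith), h6, h13]

/-- If `j₁ = 0`, `j₂ > 0`, `j₃ > 0`, then the system `b₁(b₂² − b₃²) = j₁`,
`b₂(b₁² − b₃²) = j₂`, `b₃(b₁² + b₂²) = j₃` has exactly one solution
`(0, −(j₃²/j₂)^{1/3}, (j₂²/j₃)^{1/3})` when `j₃ ≤ j₂`, and exactly five solutions when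
`j₃ > j₂`: the above one together with
`(±√(j₃+j₂)/(4(j₃−j₂))^{1/6}, c₁, c₁)` with `c₁ = ((j₃−j₂)/2)^{1/3}` and
`(±√(j₃−j₂)/(4(j₃+j₂))^{1/6}, −c₂, c₂)` with `c₂ = ((j₃+j₂)/2)^{1/3}`. -/
theorem hyperbolic_cubic_j1_zero (j₁ j₂ j₃ : ℝ)
    (h1 : j₁ = 0) (h2 : 0 < j₂) (h3 : 0 < j₃) :
    (j₃ ≤ j₂ → ∀ b₁ b₂ b₃ : ℝ,
      (b₁ * (b₂ ^ 2 - b₃ ^ 2) = j₁ ∧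
        b₂ * (b₁ ^ 2 - b₃ ^ 2) = j₂ ∧
        b₃ * (b₁ ^ 2 + b₂ ^ 2) = j₃) ↔
      (b₁ = 0 ∧ b₂ = -cbrt (j₃ ^ 2 / j₂) ∧ b₃ = cbrt (j₂ ^ 2 / j₃))) ∧
    (j₂ < j₃ →
      ∃ e f c₁ c₂ : ℝ,
        e = Real.sqrt (j₃ + j₂) / (4 * (j₃ - j₂)) ^ ((1 : ℝ) / 6) ∧
        f = Real.sqrt (j₃ - j₂) / (4 * (j₃ + j₂)) ^ ((1 : ℝ) / 6) ∧
        c₁ = cbrt ((j₃ - j₂) / 2) ∧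
        c₂ = cbrt ((j₃ + j₂) / 2) ∧
        {t : ℝ × ℝ × ℝ |
            t.1 * (t.2.1 ^ 2 - t.2.2 ^ 2) = j₁ ∧
            t.2.1 * (t.1 ^ 2 - t.2.2 ^ 2) = j₂ ∧
            t.2.2 * (t.1 ^ 2 + t.2.1 ^ 2) = j₃} =
          {(0, -cbrt (j₃ ^ 2 / j₂), cbrt (j₂ ^ 2 / j₃)),
            (e, c₁, c₁), (-e, c₁, c₁), (f, -c₂, c₂), (-f, -c₂, c₂)} ∧
        ({(0, -cbrt (j₃ ^ 2 / j₂), cbrt (j₂ ^ 2 / j₃)),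
            (e, c₁, c₁), (-e, c₁, c₁), (f, -c₂, c₂), (-f, -c₂, c₂)} :
          Set (ℝ × ℝ × ℝ)).ncard = 5) := by
  subst h1
  constructor
  · intro hle b₁ b₂ b₃
    constructor
    · rintro ⟨e1, e2, e3⟩
      rcases forward_classify h2 h3 e1 e2 e3 with h | ⟨hj, _⟩ | ⟨hj, _⟩
      · exact h
      · linarith
      · linarith
    · intro h
      exact backward_sol h2 h3 (Or.inl h)
  · intro hj
    set e := Real.sqrt (j₃ + j₂) / (4 * (j₃ - j₂)) ^ ((1 : ℝ) / 6) with hedef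
    set f := Real.sqrt (j₃ - j₂) / (4 * (j₃ + j₂)) ^ ((1 : ℝ) / 6) with hfdef
    set c₁ := cbrt ((j₃ - j₂) / 2) with hc1def
    set c₂ := cbrt ((j₃ + j₂) / 2) with hc2def
    have hc1 : 0 < c₁ := cbrt_pos (by linarith)
    have hc2 : 0 < c₂ := cbrt_pos (by linarith)
    have he : 0 < e := div_pos (Real.sqrt_pos.mpr (by linarith))
      (Real.rpow_pos_of_pos (by linarith) _)
    have hf : 0 < f := div_pos (Real.sqrt_pos.mpr (by linarith))
      (Real.rpow_pos_of_pos (by linarith) _)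
    refine ⟨e, f, c₁, c₂, rfl, rfl, rfl, rfl, ?_, ?_⟩
    · ext ⟨t1, t2, t3⟩
      simp only [Set.mem_setOf_eq, Set.mem_insert_iff, Set.mem_singleton_iff, Prod.mk.injEq]
      constructor
      · rintro ⟨e1, e2, e3⟩
        rcases forward_classify h2 h3 e1 e2 e3 with h | ⟨_, hb2, hb3, hb1⟩ | ⟨_, hb3, hb2, hb1⟩
        · exact Or.inl h
        · have hsq : t1 ^ 2 = e ^ 2 := by rw [hb1, hb2, hedef]; exact (e_sq h2 hj).symm
          have : (t1 - e) * (t1 + e) = 0 := by linear_combination hsq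
          rcases mul_eq_zero.mp this with h' | h'
          · exact Or.inr (Or.inl ⟨by linarith, hb2, hb3.trans hb2⟩)
          · exact Or.inr (Or.inr (Or.inl ⟨by linarith, hb2, hb3.trans hb2⟩))
        · have hsq : t1 ^ 2 = f ^ 2 := by rw [hb1, hb3, hfdef]; exact (f_sq h2 hj).symm
          have : (t1 - f) * (t1 + f) = 0 := by linear_combination hsq
          rcases mul_eq_zero.mp this with h' | h'
          · exact Or.inr (Or.inr (Or.inr (Or.inl ⟨by linarith, by rw [hb2, hb3], hb3⟩)))
          · exact Or.inr (Or.inr (Or.inr (Or.inr ⟨by linarith, by rw [hb2, hb3], hb3⟩)))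
      · rintro (⟨rfl, rfl, rfl⟩ | ⟨rfl, rfl, rfl⟩ | ⟨rfl, rfl, rfl⟩ | ⟨rfl, rfl, rfl⟩ |
          ⟨rfl, rfl, rfl⟩)
        · exact backward_sol h2 h3 (Or.inl ⟨rfl, rfl, rfl⟩)
        · exact backward_sol h2 h3 (Or.inr (Or.inl ⟨hj, rfl, rfl, by
            rw [hedef, e_sq h2 hj, hc1def]⟩))
        · exact backward_sol h2 h3 (Or.inr (Or.inl ⟨hj, rfl, rfl, by
            rw [neg_pow, hedef]; rw [e_sq h2 hj, hc1def]; ring⟩))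
        · exact backward_sol h2 h3 (Or.inr (Or.inr ⟨hj, rfl, rfl, by
            rw [hfdef, f_sq h2 hj, hc2def]⟩))
        · exact backward_sol h2 h3 (Or.inr (Or.inr ⟨hj, rfl, rfl, by
            rw [neg_pow, hfdef]; rw [f_sq h2 hj, hc2def]; ring⟩))
    · have hA : 0 < cbrt (j₃ ^ 2 / j₂) := cbrt_pos (by positivity)
      rw [Set.ncard_insert_of_notMem ?m0 (Set.toFinite _),
        Set.ncard_insert_of_notMem ?m1 (Set.toFinite _),
        Set.ncard_insert_of_notMem ?m2 (Set.toFinite _),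
        Set.ncard_insert_of_notMem ?m3 (Set.toFinite _),
        Set.ncard_singleton]
      case m0 =>
        simp only [Set.mem_insert_iff, Set.mem_singleton_iff, Prod.mk.injEq, not_or]
        refine ⟨?_, ?_, ?_, ?_⟩ <;> rintro ⟨ha, -, -⟩ <;> linarith
      case m1 =>
        simp only [Set.mem_insert_iff, Set.mem_singleton_iff, Prod.mk.injEq, not_or]
        refine ⟨?_, ?_, ?_⟩ <;> rintro ⟨ha, hb, -⟩ <;> linarith
      case m2 =>
        simp only [Set.mem_insert_iff, Set.mem_singleton_iff, Prod.mk.injEq, not_or]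
        refine ⟨?_, ?_⟩ <;> rintro ⟨ha, hb, -⟩ <;> linarith
      case m3 =>
        simp only [Set.mem_singleton_iff, Prod.mk.injEq, not_or]
        rintro ⟨ha, -, -⟩; linarith
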